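/- arXiv:1402.3388 — 3 statements merged into one kernel-verified Lean document; each statement's English description precedes it below -/
import Mathlib

section
/- For every LTL formula φ (in negation normal form over atomic propositions Ap), every finite word w ∈ (2^Ap)* and every infinite word w' ∈ (2^Ap)^ω, the concatenation w·w' satisfies φ if and only if w' satisfies af(φ, w), where af is the 'after function' defined by structural recursion on φ. -/
namespace LTLF

/-- LTL formulas in negation normal form over atomic propositions `Ap`. -/
inductive LTL (Ap : Type) : Type
  | tt : LTL Ap
  | ff : LTL Ap
  | atom : Ap → LTL Ap
  | natom : Ap → LTL Ap
  | and : LTL Ap → LTL Ap → LTL Ap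
  | or : LTL Ap → LTL Ap → LTL Ap
  | next : LTL Ap → LTL Ap
  | fut : LTL Ap → LTL Ap
  | glob : LTL Ap → LTL Ap
  | untl : LTL Ap → LTL Ap → LTL Ap

variable {Ap : Type}

/-- Infinite words over the alphabet `2^Ap`. -/
abbrev Word (Ap : Type) := ℕ → Set Ap

/-- The suffix `w_k`. -/
def suffix (w : Word Ap) (k : ℕ) : Word Ap := fun i => w (i + k)

/-- Standard LTL semantics on infinite words. -/
def Sat : LTL Ap → Word Ap → Prop
  | .tt, _ => True
  | .ff, _ => False
  | .atom a, w => a ∈ w 0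
  | .natom a, w => a ∉ w 0
  | .and φ ψ, w => Sat φ w ∧ Sat ψ w
  | .or φ ψ, w => Sat φ w ∨ Sat ψ w
  | .next φ, w => Sat φ (suffix w 1)
  | .fut φ, w => ∃ k, Sat φ (suffix w k)
  | .glob φ, w => ∀ k, Sat φ (suffix w k)
  | .untl φ ψ, w => ∃ k, Sat ψ (suffix w k) ∧ ∀ j < k, Sat φ (suffix w j)

open Classical in
/-- The "after function" `af(φ, ν)`. -/
noncomputable def af : LTL Ap → Set Ap → LTL Ap
  | .tt, _ => .tt
  | .ff, _ => .ff
  | .atom a, ν => if a ∈ ν then .tt else .ff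
  | .natom a, ν => if a ∈ ν then .ff else .tt
  | .and φ ψ, ν => .and (af φ ν) (af ψ ν)
  | .or φ ψ, ν => .or (af φ ν) (af ψ ν)
  | .next φ, _ => φ
  | .fut φ, ν => .or (af φ ν) (.fut φ)
  | .glob φ, ν => .and (af φ ν) (.glob φ)
  | .untl φ ψ, ν => .or (af ψ ν) (.and (af φ ν) (.untl φ ψ))

/-- `af` extended to finite words. -/
noncomputable def afw (φ : LTL Ap) (u : List (Set Ap)) : LTL Ap := u.foldl af φ

open Classical in
/-- The variant `afG`, identical to `af` except `afG(Gφ, ν) = Gφ`. -/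
noncomputable def afG : LTL Ap → Set Ap → LTL Ap
  | .tt, _ => .tt
  | .ff, _ => .ff
  | .atom a, ν => if a ∈ ν then .tt else .ff
  | .natom a, ν => if a ∈ ν then .ff else .tt
  | .and φ ψ, ν => .and (afG φ ν) (afG ψ ν)
  | .or φ ψ, ν => .or (afG φ ν) (afG ψ ν)
  | .next φ, _ => φ
  | .fut φ, ν => .or (afG φ ν) (.fut φ)
  | .glob φ, _ => .glob φ
  | .untl φ ψ, ν => .or (afG ψ ν) (.and (afG φ ν) (.untl φ ψ))

/-- `afG` extended to finite words. -/
noncomputable def afGw (φ : LTL Ap) (u : List (Set Ap)) : LTL Ap := u.foldl afG φ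

/-- The finite infix `w[i..j] = w[i] w[i+1] ⋯ w[j]`. -/
def infixW (w : Word Ap) (i j : ℕ) : List (Set Ap) :=
  (List.range (j + 1 - i)).map (fun k => w (i + k))

/-- The finite prefix `w[0..i]`. -/
def prefixW (w : Word Ap) (i : ℕ) : List (Set Ap) := infixW w 0 i

/-- Concatenation of a finite word with an infinite word. -/
def cat (u : List (Set Ap)) (w : Word Ap) : Word Ap :=
  fun k => if h : k < u.length then u.get ⟨k, h⟩ else w (k - u.length)

/-- Propositional evaluation of a formula under a valuation `v`, treating
literals and temporal formulas (`X`, `F`, `G`, `U`) as opaque propositional atoms. -/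
def propSat (v : LTL Ap → Prop) : LTL Ap → Prop
  | .tt => True
  | .ff => False
  | .and φ ψ => propSat v φ ∧ propSat v ψ
  | .or φ ψ => propSat v φ ∨ propSat v ψ
  | φ => v φ

/-- A valuation is consistent on literals: `a` and `¬a` get complementary values. -/
def LitConsistent (v : LTL Ap → Prop) : Prop :=
  ∀ a : Ap, v (.atom a) ↔ ¬ v (.natom a)

/-- Propositional implication `φ ⊨_p ψ`. -/
def PropImp (φ ψ : LTL Ap) : Prop :=
  ∀ v : LTL Ap → Prop, LitConsistent v → propSat v φ → propSat v ψ

/-- Propositional equivalence `φ ≡_p ψ`. -/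
def PropEquiv (φ ψ : LTL Ap) : Prop :=
  ∀ v : LTL Ap → Prop, LitConsistent v → (propSat v φ ↔ propSat v ψ)

/-- `⋀_{χ ∈ H} χ ⊨_p ψ` : the (possibly infinite) conjunction of the
hypotheses `H` propositionally implies `ψ`. -/
def PropImpSet (H : Set (LTL Ap)) (ψ : LTL Ap) : Prop :=
  ∀ v : LTL Ap → Prop, LitConsistent v → (∀ χ ∈ H, propSat v χ) → propSat v ψ

/-- The list of subformulas of a formula. -/
def subfs : LTL Ap → List (LTL Ap)
  | .tt => [.tt]
  | .ff => [.ff]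
  | .atom a => [.atom a]
  | .natom a => [.natom a]
  | .and φ ψ => .and φ ψ :: (subfs φ ++ subfs ψ)
  | .or φ ψ => .or φ ψ :: (subfs φ ++ subfs ψ)
  | .next φ => .next φ :: subfs φ
  | .fut φ => .fut φ :: subfs φ
  | .glob φ => .glob φ :: subfs φ
  | .untl φ ψ => .untl φ ψ :: (subfs φ ++ subfs ψ)

/-- `Gψ` is a `G`-subformula of `φ`. -/
def GSub (φ ψ : LTL Ap) : Prop := LTL.glob ψ ∈ subfs φ

/-- A formula is `G`-free if it contains no occurrence of `G`. -/
def GFree : LTL Ap → Prop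
  | .glob _ => False
  | .and φ ψ => GFree φ ∧ GFree ψ
  | .or φ ψ => GFree φ ∧ GFree ψ
  | .next φ => GFree φ
  | .fut φ => GFree φ
  | .untl φ ψ => GFree φ ∧ GFree ψ
  | _ => True

/-- `ind(w, ψ)`: the least index `j` with `w_j ⊨ Gψ`. -/
noncomputable def ind (w : Word Ap) (ψ : LTL Ap) : ℕ :=
  sInf {j | Sat (.glob ψ) (suffix w j)}

/-- Prepend a letter to an infinite word. -/
def consW (ν : Set Ap) (w : Word Ap) : Word Ap
  | 0 => ν
  | n+1 => w n

lemma sat_af (φ : LTL Ap) (ν : Set Ap) (w : Word Ap) :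
    Sat (af φ ν) w ↔ Sat φ (consW ν w) := by
  induction φ with
  | tt => simp [af, Sat]
  | ff => simp [af, Sat]
  | atom a => by_cases h : a ∈ ν <;> simp [af, Sat, h, consW]
  | natom a => by_cases h : a ∈ ν <;> simp [af, Sat, h, consW]
  | and φ ψ ihφ ihψ => simp [af, Sat, ihφ, ihψ]
  | or φ ψ ihφ ihψ => simp [af, Sat, ihφ, ihψ]
  | next φ ih => exact Iff.rfl
  | fut φ ih =>
    constructor
    · rintro (h | ⟨k, h⟩)
      · exact ⟨0, ih.mp h⟩
      · exact ⟨k + 1, h⟩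
    · rintro ⟨k, h⟩
      cases k with
      | zero => exact Or.inl (ih.mpr h)
      | succ n => exact Or.inr ⟨n, h⟩
  | glob φ ih =>
    constructor
    · rintro ⟨h0, h⟩ k
      cases k with
      | zero => exact ih.mp h0
      | succ n => exact h n
    · intro h
      exact ⟨ih.mpr (h 0), fun k => h (k + 1)⟩
  | untl φ ψ ihφ ihψ =>
    constructor
    · rintro (h | ⟨hφ, k, hψ, hj⟩)
      · exact ⟨0, ihψ.mp h, fun j hj => absurd hj (Nat.not_lt_zero j)⟩
      · refine ⟨k + 1, hψ, fun j hjk => ?_⟩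
        cases j with
        | zero => exact ihφ.mp hφ
        | succ m => exact hj m (Nat.lt_of_succ_lt_succ hjk)
    · rintro ⟨k, hψ, hj⟩
      cases k with
      | zero => exact Or.inl (ihψ.mpr hψ)
      | succ n =>
        exact Or.inr ⟨ihφ.mpr (hj 0 (Nat.succ_pos n)), n, hψ,
          fun j hjk => hj (j + 1) (Nat.succ_lt_succ hjk)⟩

lemma cat_nil (w : Word Ap) : cat [] w = w := by
  funext k; simp [cat]

lemma cat_cons (ν : Set Ap) (u : List (Set Ap)) (w : Word Ap) :
    cat (ν :: u) w = consW ν (cat u w) := by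
  funext k
  cases k with
  | zero => simp [cat, consW]
  | succ n =>
    simp only [cat, consW, List.length_cons, Nat.succ_lt_succ_iff, Nat.succ_sub_succ]
    split <;> rfl

/-- for every formula `φ`, finite word `u` and infinite word `w'`,
`u·w' ⊨ φ` iff `w' ⊨ af(φ, u)`. -/
theorem fundamental_af {Ap : Type} (φ : LTL Ap) (u : List (Set Ap)) (w' : Word Ap) :
    Sat φ (cat u w') ↔ Sat (afw φ u) w' := by
  induction u generalizing φ with
  | nil => rw [cat_nil]; exact Iff.rfl
  | cons ν u ih =>
    rw [cat_cons, ← sat_af]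
    exact ih (af φ ν)

end LTLF
end

section
/- Let φ be an LTL formula, G a set of G-subformulas of φ, and afG the variant of af satisfying afG(Gψ,ν)=Gψ. If a formula φ' is propositionally implied by the conjunction ⋀_{Gψ∈G} Gψ, then for every letter ν ∈ 2^Ap, the formula afG(φ',ν) is also propositionally implied by ⋀_{Gψ∈G} Gψ. -/
namespace LTLF

variable {Ap : Type}

/-- if `⋀_{Gψ∈G} Gψ ⊨_p φ'` then `⋀_{Gψ∈G} Gψ ⊨_p afG(φ', ν)`:
accepting states of `M(φ, G)` are closed under transitions. -/
theorem afG_preserves_propImp {Ap : Type} (φ : LTL Ap) (G : Set (LTL Ap))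
    (hG : ∀ ψ ∈ G, GSub φ ψ) (φ' : LTL Ap)
    (h : PropImpSet (LTL.glob '' G) φ') (ν : Set Ap) :
    PropImpSet (LTL.glob '' G) (afG φ' ν) := by
  intro v hv hsat
  set v' : LTL Ap → Prop := fun χ => propSat v (afG χ ν) with hv'
  have key : ∀ χ : LTL Ap, propSat v' χ ↔ propSat v (afG χ ν) := by
    intro χ
    induction χ with
    | tt => simp [propSat, afG]
    | ff => simp [propSat, afG]
    | atom a => rfl
    | natom a => rfl
    | and φ ψ ih1 ih2 => simp only [propSat, afG]; rw [ih1, ih2]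
    | or φ ψ ih1 ih2 => simp only [propSat, afG]; rw [ih1, ih2]
    | next φ _ => rfl
    | fut φ _ => rfl
    | glob φ _ => rfl
    | untl φ ψ _ _ => rfl
  have hv'c : LitConsistent v' := by
    intro a
    show propSat v (afG (.atom a) ν) ↔ ¬ propSat v (afG (.natom a) ν)
    by_cases ha : a ∈ ν <;> simp [afG, ha, propSat]
  have hsat' : ∀ χ ∈ LTL.glob '' G, propSat v' χ := by
    rintro χ ⟨ψ, hψ, rfl⟩
    rw [key]
    exact hsat _ ⟨ψ, hψ, rfl⟩
  have := h v' hv'c hsat'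
  rwa [key] at this

end LTLF
end

section
/- Let φ be an LTL formula and w an infinite word with w ⊨ φ. Let G be the set of G-subformulas Gψ of φ such that w ⊨ FGψ. Then for almost every i ∈ ℕ, the conjunction ⋀_{Gψ∈G} Gψ propositionally implies afG(φ, w[0..i]). -/
namespace LTLF

variable {Ap : Type}

/-! ### Auxiliary machinery for the proof -/

section Aux

def pref (w : Word Ap) (n : ℕ) : List (Set Ap) := (List.range n).map w

lemma suffix_zero (w : Word Ap) : suffix w 0 = w := rfl

lemma suffix_suffix (w : Word Ap) (a b : ℕ) :
    suffix (suffix w a) b = suffix w (b + a) := by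
  funext n; simp [suffix, Nat.add_assoc]

lemma pref_succ (w : Word Ap) (n : ℕ) :
    pref w (n + 1) = w 0 :: pref (suffix w 1) n := by
  simp [pref, List.range_succ_eq_map, List.map_map, suffix, Function.comp]

lemma prefixW_eq (w : Word Ap) (i : ℕ) : prefixW w i = pref w (i + 1) := by
  simp [prefixW, infixW, pref]

lemma afGw_nil (φ : LTL Ap) : afGw φ [] = φ := rfl

lemma afGw_cons (φ : LTL Ap) (ν : Set Ap) (u : List (Set Ap)) :
    afGw φ (ν :: u) = afGw (afG φ ν) u := rfl

lemma afGw_tt (u : List (Set Ap)) : afGw (.tt : LTL Ap) u = .tt := by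
  induction u with
  | nil => rfl
  | cons ν u ih => rw [afGw_cons]; exact ih

lemma afGw_glob (ψ : LTL Ap) (u : List (Set Ap)) : afGw (.glob ψ) u = .glob ψ := by
  induction u with
  | nil => rfl
  | cons ν u ih => rw [afGw_cons]; exact ih

lemma afGw_and (α β : LTL Ap) (u : List (Set Ap)) :
    afGw (.and α β) u = .and (afGw α u) (afGw β u) := by
  induction u generalizing α β with
  | nil => rfl
  | cons ν u ih => rw [afGw_cons]; exact ih _ _

lemma afGw_or (α β : LTL Ap) (u : List (Set Ap)) :
    afGw (.or α β) u = .or (afGw α u) (afGw β u) := by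
  induction u generalizing α β with
  | nil => rfl
  | cons ν u ih => rw [afGw_cons]; exact ih _ _

@[simp] lemma propSat_tt (v : LTL Ap → Prop) : propSat v (.tt) ↔ True := Iff.rfl
@[simp] lemma propSat_and (v : LTL Ap → Prop) (α β : LTL Ap) :
    propSat v (.and α β) ↔ propSat v α ∧ propSat v β := Iff.rfl
@[simp] lemma propSat_or (v : LTL Ap → Prop) (α β : LTL Ap) :
    propSat v (.or α β) ↔ propSat v α ∨ propSat v β := Iff.rfl
@[simp] lemma propSat_glob (v : LTL Ap → Prop) (ψ : LTL Ap) :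
    propSat v (.glob ψ) ↔ v (.glob ψ) := Iff.rfl

lemma PropImpSet.mono {H H' : Set (LTL Ap)} {ψ : LTL Ap} (hs : H ⊆ H')
    (h : PropImpSet H ψ) : PropImpSet H' ψ :=
  fun v hv hH => h v hv (fun χ hχ => hH χ (hs hχ))

lemma PropImpSet.orl {H : Set (LTL Ap)} {α β : LTL Ap} (h : PropImpSet H α) :
    PropImpSet H (.or α β) :=
  fun v hv hH => Or.inl (h v hv hH)

lemma PropImpSet.orr {H : Set (LTL Ap)} {α β : LTL Ap} (h : PropImpSet H β) :
    PropImpSet H (.or α β) :=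
  fun v hv hH => Or.inr (h v hv hH)

lemma PropImpSet.and_intro {H : Set (LTL Ap)} {α β : LTL Ap}
    (h1 : PropImpSet H α) (h2 : PropImpSet H β) : PropImpSet H (.and α β) :=
  fun v hv hH => ⟨h1 v hv hH, h2 v hv hH⟩

lemma PropImpSet.tt {H : Set (LTL Ap)} : PropImpSet H (.tt : LTL Ap) :=
  fun _ _ _ => trivial

/-- The hypothesis set. -/
def Gset (φ : LTL Ap) (w : Word Ap) : Set (LTL Ap) :=
  LTL.glob '' {ψ | GSub φ ψ ∧ Sat (LTL.fut (LTL.glob ψ)) w}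

lemma Gset_mono {φ φ' : LTL Ap} (hsub : ∀ ψ, GSub φ' ψ → GSub φ ψ) (w : Word Ap) :
    Gset φ' w ⊆ Gset φ w := by
  rintro _ ⟨ψ, ⟨hG, hF⟩, rfl⟩
  exact ⟨ψ, ⟨hsub ψ hG, hF⟩, rfl⟩

lemma Gset_suffix (φ : LTL Ap) (w : Word Ap) (k : ℕ) :
    Gset φ (suffix w k) ⊆ Gset φ w := by
  rintro _ ⟨ψ, ⟨hG, j, hj⟩, rfl⟩
  refine ⟨ψ, ⟨hG, j + k, ?_⟩, rfl⟩
  rwa [suffix_suffix] at hj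

lemma fut_step {H : Set (LTL Ap)} (φ : LTL Ap) :
    ∀ (k : ℕ) (w : Word Ap) (n : ℕ), n ≥ k + 1 →
      PropImpSet H (afGw φ (pref (suffix w k) (n - k))) →
      PropImpSet H (afGw (.fut φ) (pref w n)) := by
  intro k
  induction k with
  | zero =>
    intro w n hn h
    obtain ⟨m, rfl⟩ : ∃ m, n = m + 1 := ⟨n - 1, by omega⟩
    rw [pref_succ, afGw_cons]
    show PropImpSet H (afGw (.or (afG φ (w 0)) (.fut φ)) (pref (suffix w 1) m))
    rw [afGw_or]
    apply PropImpSet.orl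
    rw [suffix_zero] at h
    simpa [pref_succ, afGw_cons] using h
  | succ k ih =>
    intro w n hn h
    obtain ⟨m, rfl⟩ : ∃ m, n = m + 1 := ⟨n - 1, by omega⟩
    rw [pref_succ, afGw_cons]
    show PropImpSet H (afGw (.or (afG φ (w 0)) (.fut φ)) (pref (suffix w 1) m))
    rw [afGw_or]
    apply PropImpSet.orr
    apply ih (suffix w 1) m (by omega)
    rw [suffix_suffix]
    simpa [Nat.succ_sub_succ] using h

lemma untl_step {H : Set (LTL Ap)} (φ ψ : LTL Ap) :
    ∀ (k : ℕ) (w : Word Ap) (n : ℕ), n ≥ k + 1 →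
      PropImpSet H (afGw ψ (pref (suffix w k) (n - k))) →
      (∀ j < k, PropImpSet H (afGw φ (pref (suffix w j) (n - j)))) →
      PropImpSet H (afGw (.untl φ ψ) (pref w n)) := by
  intro k
  induction k with
  | zero =>
    intro w n hn h _
    obtain ⟨m, rfl⟩ : ∃ m, n = m + 1 := ⟨n - 1, by omega⟩
    rw [pref_succ, afGw_cons]
    show PropImpSet H
      (afGw (.or (afG ψ (w 0)) (.and (afG φ (w 0)) (.untl φ ψ))) (pref (suffix w 1) m))
    rw [afGw_or]
    apply PropImpSet.orl
    rw [suffix_zero] at h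
    simpa [pref_succ, afGw_cons] using h
  | succ k ih =>
    intro w n hn hψ hφ
    obtain ⟨m, rfl⟩ : ∃ m, n = m + 1 := ⟨n - 1, by omega⟩
    rw [pref_succ, afGw_cons]
    show PropImpSet H
      (afGw (.or (afG ψ (w 0)) (.and (afG φ (w 0)) (.untl φ ψ))) (pref (suffix w 1) m))
    rw [afGw_or, afGw_and]
    apply PropImpSet.orr
    apply PropImpSet.and_intro
    · have h0 := hφ 0 (by omega)
      rw [suffix_zero] at h0
      simpa [pref_succ, afGw_cons] using h0
    · apply ih (suffix w 1) m (by omega)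
      · rw [suffix_suffix]
        simpa [Nat.succ_sub_succ] using hψ
      · intro j hj
        have hj1 := hφ (j + 1) (by omega)
        rw [suffix_suffix]
        simpa [Nat.succ_sub_succ] using hj1

lemma key (φ : LTL Ap) : ∀ (w : Word Ap), Sat φ w →
    ∃ N : ℕ, ∀ n ≥ N, PropImpSet (Gset φ w) (afGw φ (pref w n)) := by
  induction φ with
  | tt =>
    intro w _
    exact ⟨0, fun n _ => by rw [afGw_tt]; exact PropImpSet.tt⟩
  | ff =>
    intro w hw
    exact hw.elim
  | atom a =>
    intro w hw
    refine ⟨1, fun n hn => ?_⟩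
    obtain ⟨m, rfl⟩ : ∃ m, n = m + 1 := ⟨n - 1, by omega⟩
    rw [pref_succ, afGw_cons]
    have ha : afG (LTL.atom a) (w 0) = LTL.tt := by simp [afG, show a ∈ w 0 from hw]
    rw [ha, afGw_tt]
    exact PropImpSet.tt
  | natom a =>
    intro w hw
    refine ⟨1, fun n hn => ?_⟩
    obtain ⟨m, rfl⟩ : ∃ m, n = m + 1 := ⟨n - 1, by omega⟩
    rw [pref_succ, afGw_cons]
    have ha : afG (LTL.natom a) (w 0) = LTL.tt := by simp [afG, show a ∉ w 0 from hw]
    rw [ha, afGw_tt]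
    exact PropImpSet.tt
  | and φ ψ ihφ ihψ =>
    intro w hw
    obtain ⟨N₁, h₁⟩ := ihφ w hw.1
    obtain ⟨N₂, h₂⟩ := ihψ w hw.2
    refine ⟨max N₁ N₂, fun n hn => ?_⟩
    rw [afGw_and]
    have hs₁ : ∀ χ, GSub φ χ → GSub (.and φ ψ) χ := by
      intro χ h; simp only [GSub, subfs, List.mem_cons, List.mem_append] at *; tauto
    have hs₂ : ∀ χ, GSub ψ χ → GSub (.and φ ψ) χ := by
      intro χ h; simp only [GSub, subfs, List.mem_cons, List.mem_append] at *; tauto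
    exact PropImpSet.and_intro
      ((h₁ n (le_of_max_le_left hn)).mono (Gset_mono hs₁ w))
      ((h₂ n (le_of_max_le_right hn)).mono (Gset_mono hs₂ w))
  | or φ ψ ihφ ihψ =>
    intro w hw
    have hs₁ : ∀ χ, GSub φ χ → GSub (.or φ ψ) χ := by
      intro χ h; simp only [GSub, subfs, List.mem_cons, List.mem_append] at *; tauto
    have hs₂ : ∀ χ, GSub ψ χ → GSub (.or φ ψ) χ := by
      intro χ h; simp only [GSub, subfs, List.mem_cons, List.mem_append] at *; tauto
    rcases hw with hw | hw
    · obtain ⟨N, h⟩ := ihφ w hw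
      exact ⟨N, fun n hn => by
        rw [afGw_or]; exact ((h n hn).mono (Gset_mono hs₁ w)).orl⟩
    · obtain ⟨N, h⟩ := ihψ w hw
      exact ⟨N, fun n hn => by
        rw [afGw_or]; exact ((h n hn).mono (Gset_mono hs₂ w)).orr⟩
  | next φ ih =>
    intro w hw
    obtain ⟨N, h⟩ := ih (suffix w 1) hw
    refine ⟨N + 1, fun n hn => ?_⟩
    obtain ⟨m, rfl⟩ : ∃ m, n = m + 1 := ⟨n - 1, by omega⟩
    rw [pref_succ, afGw_cons]
    show PropImpSet _ (afGw φ (pref (suffix w 1) m))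
    have hs : ∀ χ, GSub φ χ → GSub (.next φ) χ := by
      intro χ h; simp only [GSub, subfs, List.mem_cons] at *; tauto
    exact (h m (by omega)).mono ((Gset_mono hs _).trans (Gset_suffix _ w 1))
  | fut φ ih =>
    intro w hw
    obtain ⟨k, hk⟩ := hw
    obtain ⟨N, h⟩ := ih (suffix w k) hk
    refine ⟨k + N + 1, fun n hn => ?_⟩
    apply fut_step φ k w n (by omega)
    have hs : ∀ χ, GSub φ χ → GSub (.fut φ) χ := by
      intro χ h; simp only [GSub, subfs, List.mem_cons] at *; tauto
    exact (h (n - k) (by omega)).mono ((Gset_mono hs _).trans (Gset_suffix _ w k))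
  | glob ψ ih =>
    intro w hw
    refine ⟨0, fun n _ => ?_⟩
    rw [afGw_glob]
    intro v hv hH
    rw [propSat_glob]
    refine hH _ ⟨ψ, ⟨List.mem_cons_self, 0, ?_⟩, rfl⟩
    rwa [suffix_zero]
  | untl φ ψ ihφ ihψ =>
    intro w hw
    obtain ⟨k, hψk, hφk⟩ := hw
    obtain ⟨Nψ, hNψ⟩ := ihψ (suffix w k) hψk
    choose Nf hNf using fun (j : ℕ) (hj : j < k) => ihφ (suffix w j) (hφk j hj)
    set M : ℕ := (Finset.range k).sup (fun j => if h : j < k then Nf j h else 0) with hM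
    have hMle : ∀ j (hj : j < k), Nf j hj ≤ M := by
      intro j hj
      have := Finset.le_sup (f := fun j => if h : j < k then Nf j h else 0)
        (Finset.mem_range.mpr hj)
      simpa [dif_pos hj] using this
    have hs₁ : ∀ χ, GSub φ χ → GSub (.untl φ ψ) χ := by
      intro χ h; simp only [GSub, subfs, List.mem_cons, List.mem_append] at *; tauto
    have hs₂ : ∀ χ, GSub ψ χ → GSub (.untl φ ψ) χ := by
      intro χ h; simp only [GSub, subfs, List.mem_cons, List.mem_append] at *; tauto
    refine ⟨k + Nψ + M + 1, fun n hn => ?_⟩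
    apply untl_step φ ψ k w n (by omega)
    · exact (hNψ (n - k) (by omega)).mono ((Gset_mono hs₂ _).trans (Gset_suffix _ w k))
    · intro j hj
      have hle := hMle j hj
      exact (hNf j hj (n - j) (by omega)).mono
        ((Gset_mono hs₁ _).trans (Gset_suffix _ w j))

end Aux

/-- if `w ⊨ φ` and `G` is the set of `G`-subformulas `Gψ` of `φ`
with `w ⊨ FGψ`, then for almost every `i`, `⋀_{Gψ∈G} Gψ ⊨_p afG(φ, w[0..i])`. -/
theorem propImp_afG_prefix {Ap : Type} (φ : LTL Ap) (w : Word Ap) (hw : Sat φ w) :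
    ∃ N : ℕ, ∀ i ≥ N,
      PropImpSet (LTL.glob '' {ψ | GSub φ ψ ∧ Sat (LTL.fut (LTL.glob ψ)) w})
        (afGw φ (prefixW w i)) := by
  obtain ⟨N, hN⟩ := key φ w hw
  refine ⟨N, fun i hi => ?_⟩
  rw [prefixW_eq]
  exact hN (i + 1) (by omega)

end LTLF
end
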